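/- Let κ > 0 and b > 0, and let E : ℝ → ℝ be twice differentiable on [0, b] with E″(T) ≥ κ²·E(T) for all T ∈ [0, b] and E′(b) + κ·E(b) ≤ 0. Then the function T ↦ e^{−κT}·(E′(T) + κE(T)) is monotone increasing on [0, b], hence E′(T) + κE(T) ≤ 0 on [0, b], the function T ↦ e^{κT}·E(T) is antitone on [0, b], and consequently E(T) ≤ e^{−κT}·E(0) for all T ∈ [0, b]. -/

import Mathlib

/-- Convexity on a finite interval: if `E'' ≥ κ²·E` on `[0, b]` and `E'(b) + κ·E(b) ≤ 0`,
then `T ↦ e^{−κT}(E'(T) + κE(T))` is monotone on `[0, b]`, hence `E' + κE ≤ 0` there,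
`T ↦ e^{κT}·E(T)` is antitone on `[0, b]`, and `E(T) ≤ e^{−κT}·E(0)` for `T ∈ [0, b]`. -/
theorem stmt_5
    (κ b : ℝ) (hκ : 0 < κ) (hb : 0 < b) (E E' E'' : ℝ → ℝ)
    (hd1 : ∀ T ∈ Set.Icc 0 b, HasDerivAt E (E' T) T)
    (hd2 : ∀ T ∈ Set.Icc 0 b, HasDerivAt E' (E'' T) T)
    (hconv : ∀ T ∈ Set.Icc 0 b, κ ^ 2 * E T ≤ E'' T)
    (hend : E' b + κ * E b ≤ 0) :
    MonotoneOn (fun T => Real.exp (-κ * T) * (E' T + κ * E T)) (Set.Icc 0 b) ∧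
    (∀ T ∈ Set.Icc 0 b, E' T + κ * E T ≤ 0) ∧
    AntitoneOn (fun T => Real.exp (κ * T) * E T) (Set.Icc 0 b) ∧
    (∀ T ∈ Set.Icc 0 b, E T ≤ Real.exp (-κ * T) * E 0) := by
  have hbmem : b ∈ Set.Icc (0:ℝ) b := ⟨le_of_lt hb, le_refl b⟩
  have h0mem : (0:ℝ) ∈ Set.Icc (0:ℝ) b := ⟨le_refl 0, le_of_lt hb⟩
  -- derivative of g
  have hg : ∀ T ∈ Set.Icc (0:ℝ) b,
      HasDerivAt (fun T => Real.exp (-κ * T) * (E' T + κ * E T))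
        (Real.exp (-κ * T) * (E'' T - κ ^ 2 * E T)) T := by
    intro T hT
    have h1 : HasDerivAt (fun T => E' T + κ * E T) (E'' T + κ * E' T) T :=
      (hd2 T hT).add ((hd1 T hT).const_mul κ)
    have h2 : HasDerivAt (fun T : ℝ => Real.exp (-κ * T))
        (Real.exp (-κ * T) * (-κ * 1)) T :=
      ((hasDerivAt_id T).const_mul (-κ)).exp
    have := h2.mul h1
    convert this using 1
    · rfl
    · rfl
    · rfl
    ring
  -- monotone
  have hmono : MonotoneOn (fun T => Real.exp (-κ * T) * (E' T + κ * E T)) (Set.Icc 0 b) := by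
    apply monotoneOn_of_deriv_nonneg (convex_Icc 0 b)
    · exact fun x hx => (hg x hx).continuousAt.continuousWithinAt
    · intro x hx
      rw [interior_Icc] at hx
      exact ((hg x ⟨hx.1.le, hx.2.le⟩).differentiableAt).differentiableWithinAt
    · intro x hx
      rw [interior_Icc] at hx
      have hx' : x ∈ Set.Icc (0:ℝ) b := ⟨hx.1.le, hx.2.le⟩
      rw [(hg x hx').deriv]
      have := hconv x hx'
      have := Real.exp_nonneg (-κ * x)
      nlinarith
  -- nonpositivity
  have hnp : ∀ T ∈ Set.Icc (0:ℝ) b, E' T + κ * E T ≤ 0 := by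
    intro T hT
    have h1 := hmono hT hbmem hT.2
    simp only at h1
    have h2 : Real.exp (-κ * b) * (E' b + κ * E b) ≤ 0 :=
      mul_nonpos_of_nonneg_of_nonpos (Real.exp_nonneg _) hend
    nlinarith [Real.exp_pos (-κ * T)]
  -- derivative of h
  have hh : ∀ T ∈ Set.Icc (0:ℝ) b,
      HasDerivAt (fun T => Real.exp (κ * T) * E T)
        (Real.exp (κ * T) * (E' T + κ * E T)) T := by
    intro T hT
    have h2 : HasDerivAt (fun T : ℝ => Real.exp (κ * T))
        (Real.exp (κ * T) * (κ * 1)) T :=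
      ((hasDerivAt_id T).const_mul κ).exp
    have := h2.mul (hd1 T hT)
    convert this using 1
    · rfl
    · rfl
    · rfl
    ring
  have hanti : AntitoneOn (fun T => Real.exp (κ * T) * E T) (Set.Icc 0 b) := by
    apply antitoneOn_of_deriv_nonpos (convex_Icc 0 b)
    · exact fun x hx => (hh x hx).continuousAt.continuousWithinAt
    · intro x hx
      rw [interior_Icc] at hx
      exact ((hh x ⟨hx.1.le, hx.2.le⟩).differentiableAt).differentiableWithinAt
    · intro x hx
      rw [interior_Icc] at hx
      have hx' : x ∈ Set.Icc (0:ℝ) b := ⟨hx.1.le, hx.2.le⟩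
      rw [(hh x hx').deriv]
      exact mul_nonpos_of_nonneg_of_nonpos (Real.exp_nonneg _) (hnp x hx')
  refine ⟨hmono, hnp, hanti, ?_⟩
  intro T hT
  have h1 := hanti h0mem hT hT.1
  simp only [mul_zero, Real.exp_zero, one_mul] at h1
  rw [neg_mul, Real.exp_neg, inv_mul_eq_div]
  rw [le_div_iff₀ (Real.exp_pos _)]
  linarith [h1, mul_comm (Real.exp (κ * T)) (E T)]
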